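/- Pointwise nonnegativity on the region K₁ ∩ K₂ᶜ: Let c ∈ (1/2, 1] satisfy (1−c)² ≤ (2c−1)c, let r > 0, λ, σ > 0, and let y, v, x₀ ∈ ℝ^d with √c r < |(y−x₀)_k| < r. Suppose −λ(y−v)_k (y−x₀)_k (r² − (y−x₀)_k²)² ≤ (2c−1) r² (σ²/2) (y−v)_k² (y−x₀)_k². Then the combined drift-diffusion term is nonnegative: −λ(y−v)_k ∂_{x_k} φ_r(y) + (σ²/2)(y−v)_k² ∂²_{x_k} φ_r(y) ≥ 0. -/

import Mathlib

open Finset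

/-- The product mollifier `φ_r(x) = ∏_k exp(1 − r²/(r² − (x−x₀)_k²))` on the open
`ℓ∞`-ball of radius `r` around `x₀`, extended by `0` outside. -/
noncomputable def moll {d : ℕ} (r : ℝ) (x₀ x : EuclideanSpace ℝ (Fin d)) : ℝ :=
  open Classical in
  if ∀ k, |(x - x₀) k| < r then
    ∏ k, Real.exp (1 - r ^ 2 / (r ^ 2 - ((x - x₀) k) ^ 2))
  else 0

noncomputable def mollF (r s : ℝ) : ℝ := Real.exp (1 - r ^ 2 / (r ^ 2 - s ^ 2))
noncomputable def mollP (r s : ℝ) : ℝ := -(2 * r ^ 2 * s) / (r ^ 2 - s ^ 2) ^ 2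
noncomputable def mollD (r s : ℝ) : ℝ :=
  (-(2 * r ^ 2) * (r ^ 2 - s ^ 2) ^ 2 - -(2 * r ^ 2 * s) * (2 * (r ^ 2 - s ^ 2) * (-(2 * s)))) /
    ((r ^ 2 - s ^ 2) ^ 2) ^ 2

lemma sq_sub_ne (r s : ℝ) (h : |s| < r) : r ^ 2 - s ^ 2 ≠ 0 := by
  have : s ^ 2 < r ^ 2 := by
    have h0 : (0:ℝ) ≤ |s| := abs_nonneg s
    calc s ^ 2 = |s| ^ 2 := (sq_abs s).symm
    _ < r ^ 2 := by nlinarith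
  linarith

lemma mollF_hasDeriv (r s : ℝ) (h : |s| < r) :
    HasDerivAt (mollF r) (mollF r s * mollP r s) s := by
  have hq := sq_sub_ne r s h
  have h1 : HasDerivAt (fun s : ℝ => r ^ 2 - s ^ 2) (-(2 * s)) s := by
    simpa using (hasDerivAt_pow 2 s).const_sub (r ^ 2)
  have h2 := (hasDerivAt_const s (r ^ 2)).div h1 hq
  have h3 := (h2.const_sub 1).exp
  refine h3.congr_deriv ?_
  unfold mollF mollP
  simp only [Pi.div_apply]
  field_simp
  ring

lemma mollP_hasDeriv (r s : ℝ) (h : |s| < r) :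
    HasDerivAt (mollP r) (mollD r s) s := by
  have hq := sq_sub_ne r s h
  have h1 : HasDerivAt (fun s : ℝ => r ^ 2 - s ^ 2) (-(2 * s)) s := by
    simpa using (hasDerivAt_pow 2 s).const_sub (r ^ 2)
  have hn : HasDerivAt (fun s : ℝ => -(2 * r ^ 2 * s)) (-(2 * r ^ 2)) s := by
    simpa using (hasDerivAt_id s).const_mul (-(2 * r ^ 2))
  have hd := h1.pow 2
  have h2 := hn.div hd (pow_ne_zero 2 hq)
  refine h2.congr_deriv ?_
  unfold mollD
  norm_num

lemma shift_apply {d : ℕ} (y x₀ : EuclideanSpace ℝ (Fin d)) (k : Fin d) (t : ℝ) (j : Fin d) :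
    ((y + t • EuclideanSpace.single k (1:ℝ)) - x₀) j
      = (y - x₀) j + if j = k then t else 0 := by
  simp only [PiLp.sub_apply, PiLp.add_apply, PiLp.smul_apply, EuclideanSpace.single_apply,
    smul_eq_mul]
  split_ifs <;> ring

lemma moll_shift {d : ℕ} (r t : ℝ) (x₀ y : EuclideanSpace ℝ (Fin d))
    (hball : ∀ j, |(y - x₀) j| < r) (k : Fin d)
    (ht : |(y - x₀) k + t| < r) :
    moll r x₀ (y + t • EuclideanSpace.single k 1)
      = (∏ j ∈ Finset.univ.erase k, Real.exp (1 - r ^ 2 / (r ^ 2 - ((y - x₀) j) ^ 2))) *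
        mollF r ((y - x₀) k + t) := by
  unfold moll
  rw [if_pos]
  · rw [← Finset.mul_prod_erase _ _ (Finset.mem_univ k), mul_comm]
    congr 1
    · exact Finset.prod_congr rfl fun j hj => by
        rw [shift_apply, if_neg (Finset.ne_of_mem_erase hj), add_zero]
    · rw [shift_apply, if_pos rfl]; rfl
  · intro j
    rw [shift_apply]
    by_cases hj : j = k
    · subst hj; simpa using ht
    · rw [if_neg hj, add_zero]; exact hball j

lemma moll_lineDeriv_shift {d : ℕ} (r t : ℝ) (x₀ y : EuclideanSpace ℝ (Fin d))
    (hball : ∀ j, |(y - x₀) j| < r) (k : Fin d)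
    (ht : |(y - x₀) k + t| < r) :
    lineDeriv ℝ (moll r x₀) (y + t • EuclideanSpace.single k 1) (EuclideanSpace.single k 1)
      = (∏ j ∈ Finset.univ.erase k, Real.exp (1 - r ^ 2 / (r ^ 2 - ((y - x₀) j) ^ 2))) *
        (mollF r ((y - x₀) k + t) * mollP r ((y - x₀) k + t)) := by
  set s := (y - x₀) k with hs
  set E := EuclideanSpace.single k (1:ℝ) with hE
  set C := ∏ j ∈ Finset.univ.erase k, Real.exp (1 - r ^ 2 / (r ^ 2 - ((y - x₀) j) ^ 2)) with hC
  have hcomb : ∀ u : ℝ, y + t • E + u • E = y + (t + u) • E := by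
    intro u; rw [add_assoc, ← add_smul]
  have hev : ∀ᶠ u in nhds (0:ℝ), |s + t + u| < r := by
    have hcont : ContinuousAt (fun u : ℝ => |s + t + u|) 0 := by fun_prop
    exact Filter.Tendsto.eventually_lt_const (by simpa using ht) hcont
  have heq : (fun u : ℝ => moll r x₀ (y + t • E + u • E))
      =ᶠ[nhds (0:ℝ)] fun u => C * mollF r (s + t + u) := by
    filter_upwards [hev] with u hu
    rw [hcomb u, moll_shift r (t + u) x₀ y hball k (by rw [← add_assoc]; exact hu),
      ← add_assoc]
  have hval : HasDerivAt (fun u : ℝ => C * mollF r (s + t + u))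
      (C * (mollF r (s + t) * mollP r (s + t))) 0 := by
    have hF : HasDerivAt (mollF r) (mollF r (s + t) * mollP r (s + t)) (s + t + 0) := by
      simpa using mollF_hasDeriv r (s + t) ht
    exact (hF.comp_const_add (s + t) 0).const_mul C
  rw [lineDeriv, heq.deriv_eq, hval.deriv]


set_option maxHeartbeats 1000000 in
/-- **pointwise nonnegativity on the region `K₁ ∩ K₂ᶜ`.**
For `c ∈ (1/2,1]` with `(1−c)² ≤ (2c−1)c`, `√c r < |(y−x₀)_k| < r`, and the `K₂ᶜ`
inequality
`−λ(y−v)_k(y−x₀)_k(r²−(y−x₀)_k²)² ≤ (2c−1)r²(σ²/2)(y−v)_k²(y−x₀)_k²`,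
the combined drift-diffusion term is nonnegative:
`−λ(y−v)_k ∂_{x_k}φ_r(y) + (σ²/2)(y−v)_k² ∂²_{x_k}φ_r(y) ≥ 0`. -/
theorem stmt13 {d : ℕ} (c r lam σ : ℝ)
    (hc : c ∈ Set.Ioc (1 / 2 : ℝ) 1) (hcc : (1 - c) ^ 2 ≤ (2 * c - 1) * c)
    (hr : 0 < r) (hlam : 0 < lam) (hσ : 0 < σ)
    (x₀ v y : EuclideanSpace ℝ (Fin d))
    (hball : ∀ j, |(y - x₀) j| < r) (k : Fin d)
    (hk1 : Real.sqrt c * r < |(y - x₀) k|) (hk1' : |(y - x₀) k| < r)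
    (hK2 : -lam * ((y - v) k) * ((y - x₀) k) * (r ^ 2 - ((y - x₀) k) ^ 2) ^ 2 ≤
      (2 * c - 1) * r ^ 2 * (σ ^ 2 / 2) * ((y - v) k) ^ 2 * ((y - x₀) k) ^ 2) :
    0 ≤ -lam * ((y - v) k) * lineDeriv ℝ (moll r x₀) y (EuclideanSpace.single k 1) +
        σ ^ 2 / 2 * ((y - v) k) ^ 2 *
          lineDeriv ℝ (fun z => lineDeriv ℝ (moll r x₀) z (EuclideanSpace.single k 1))
            y (EuclideanSpace.single k 1) := by
  obtain ⟨hc1, hc2⟩ := hc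
  have hc0 : (0:ℝ) ≤ c := by linarith
  set s := (y - x₀) k with hsdef
  set w := (y - v) k with hwdef
  set E := EuclideanSpace.single k (1:ℝ) with hE
  set C := ∏ j ∈ Finset.univ.erase k, Real.exp (1 - r ^ 2 / (r ^ 2 - ((y - x₀) j) ^ 2)) with hC
  -- coordinate bounds
  have hs2 : c * r ^ 2 < s ^ 2 := by
    have h0 : (0:ℝ) ≤ Real.sqrt c * r := by positivity
    have h1 : c * r ^ 2 = (Real.sqrt c * r) ^ 2 := by rw [mul_pow, Real.sq_sqrt hc0]
    rw [h1, ← sq_abs s, sq, sq]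
    exact mul_self_lt_mul_self h0 hk1
  have hs2' : s ^ 2 < r ^ 2 := by
    rw [← sq_abs s, sq, sq]
    exact mul_self_lt_mul_self (abs_nonneg s) hk1'
  have hq : 0 < r ^ 2 - s ^ 2 := by linarith
  -- first derivative
  have hfirst : lineDeriv ℝ (moll r x₀) y E = C * (mollF r s * mollP r s) := by
    have h := moll_lineDeriv_shift r 0 x₀ y hball k (by rw [add_zero]; exact hk1')
    simpa only [zero_smul, add_zero] using h
  -- second derivative
  have hF : HasDerivAt (fun t : ℝ => mollF r (s + t)) (mollF r s * mollP r s) 0 :=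
    HasDerivAt.comp_const_add s 0 (by simpa using mollF_hasDeriv r s hk1')
  have hP : HasDerivAt (fun t : ℝ => mollP r (s + t)) (mollD r s) 0 :=
    HasDerivAt.comp_const_add s 0 (by simpa using mollP_hasDeriv r s hk1')
  have hsecond : lineDeriv ℝ (fun z => lineDeriv ℝ (moll r x₀) z E) y E
      = C * (mollF r s * mollP r s * mollP r s + mollF r s * mollD r s) := by
    have hev : ∀ᶠ t in nhds (0:ℝ), |s + t| < r := by
      have hcont : ContinuousAt (fun t : ℝ => |s + t|) 0 := by fun_prop
      exact Filter.Tendsto.eventually_lt_const (by simpa using hk1') hcont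
    have heq2 : (fun t : ℝ => lineDeriv ℝ (moll r x₀) (y + t • E) E)
        =ᶠ[nhds (0:ℝ)] fun t => C * (mollF r (s + t) * mollP r (s + t)) := by
      filter_upwards [hev] with t htlt
      exact moll_lineDeriv_shift r t x₀ y hball k htlt
    have hval2 : HasDerivAt (fun t : ℝ => C * (mollF r (s + t) * mollP r (s + t)))
        (C * (mollF r s * mollP r s * mollP r s + mollF r s * mollD r s)) 0 := by
      have := (hF.mul hP).const_mul C
      refine this.congr_deriv ?_
      simp
    rw [lineDeriv, heq2.deriv_eq, hval2.deriv]
  rw [hfirst, hsecond]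
  -- positivity facts
  have hCpos : 0 < C := Finset.prod_pos fun j _ => Real.exp_pos _
  have hFpos : 0 < mollF r s := Real.exp_pos _
  -- the key scalar inequality
  have hX : 0 ≤ -lam * w * mollP r s
      + σ ^ 2 / 2 * w ^ 2 * (mollP r s * mollP r s + mollD r s) := by
    have hcc' : (0:ℝ) ≤ c ^ 2 + c - 1 := by nlinarith
    have hpoly : (2 * c - 1) * r ^ 2 * (σ ^ 2 / 2) * w ^ 2 * s ^ 2
        ≤ σ ^ 2 / 2 * w ^ 2 * (3 * s ^ 4 - r ^ 4) := by
      nlinarith [mul_nonneg (mul_nonneg (by positivity : (0:ℝ) ≤ σ ^ 2 / 2 * w ^ 2)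
          (by linarith : (0:ℝ) ≤ s ^ 2 - c * r ^ 2))
          (by nlinarith : (0:ℝ) ≤ 3 * s ^ 2 + (c + 1) * r ^ 2),
        mul_nonneg (by positivity : (0:ℝ) ≤ σ ^ 2 / 2 * w ^ 2)
          (mul_nonneg hcc' (by positivity : (0:ℝ) ≤ r ^ 4))]
    have hkey : 0 ≤ lam * w * s * (r ^ 2 - s ^ 2) ^ 2
        + σ ^ 2 / 2 * w ^ 2 * (3 * s ^ 4 - r ^ 4) := by linarith [hK2, hpoly]
    have heqX : -lam * w * mollP r s
        + σ ^ 2 / 2 * w ^ 2 * (mollP r s * mollP r s + mollD r s)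
        = 2 * r ^ 2 * (lam * w * s * (r ^ 2 - s ^ 2) ^ 2
            + σ ^ 2 / 2 * w ^ 2 * (3 * s ^ 4 - r ^ 4)) / (r ^ 2 - s ^ 2) ^ 4 := by
      unfold mollP mollD
      field_simp
      ring
    rw [heqX]
    positivity
  linarith [mul_nonneg (mul_nonneg hCpos.le hFpos.le) hX]
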